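/- In the mirror of the vector space K[N^∞] spanned by monomials X^v̄ indexed by tree names, with operations X^ū ≺ X^v̄ = X^{ū ⊣ v̄} and X^ū ≻ X^v̄ = X^{ū ⊢ v̄} (extended by X^{a ∪ b} = X^a + X^b), the dendriform axioms hold: (x≺y)≺z = x≺(y⋆z), (x≻y)≺z = x≻(y≺z), (x⋆y)≻z = x≻(y≻z), where x⋆y = x≺y + x≻y. -/

import Mathlib

/-- Planar rooted binary trees. -/
inductive PB : Type
  | leaf : PB
  | node : PB → PB → PB
  deriving DecidableEq

namespace PB

/-- The name (vector encoding) of a planar binary tree. -/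
def name : PB → List ℕ
  | leaf => []
  | node l r => name l ++ [1] ++ (name r).map (fun x => x + (name l).length + 1)

/-- Number of internal (trivalent) vertices. -/
def nodes : PB → ℕ
  | leaf => 0
  | node l r => nodes l + nodes r + 1

/-- Mirror image of a tree. -/
def mirror : PB → PB
  | leaf => leaf
  | node l r => node (mirror r) (mirror l)

/-- Left subtree. -/
def left : PB → PB
  | leaf => leaf
  | node l _ => l

/-- Right subtree. -/
def right : PB → PB
  | leaf => leaf
  | node _ r => r

end PB

/-- Grafting on vectors: v ∨ w = (v, 1, w + (len v + 1)). -/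
def graft (v w : List ℕ) : List ℕ := v ++ [1] ++ w.map (fun x => x + v.length + 1)

/-- A list is a tree name if it is the name of some planar binary tree. -/
def TreeName (v : List ℕ) : Prop := ∃ t : PB, PB.name t = v

/-- Componentwise order on vectors (of the same length). -/
def vle (v w : List ℕ) : Prop := List.Forall₂ (· ≤ ·) v w

/-- Strict componentwise order. -/
def vlt (v w : List ℕ) : Prop := vle v w ∧ v ≠ w

/-- k ▷ w : shift all coordinates ≠ 1 by k, fix coordinates equal to 1. -/
def rsh (k : ℕ) (w : List ℕ) : List ℕ := w.map (fun x => if x = 1 then 1 else x + k)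

/-- The over operation on tree names: v ↗ w = (v, len v ▷ w). -/
def overOp (v w : List ℕ) : List ℕ := v ++ rsh v.length w

/-- The under operation on tree names: v ↖ w = (v, len v + w). -/
def under (v w : List ℕ) : List ℕ := v ++ w.map (fun x => x + v.length)

/-- Componentwise interval of lists. -/
def listIcc : List ℕ → List ℕ → Finset (List ℕ)
  | a :: as, b :: bs => ((Finset.Icc a b) ×ˢ listIcc as bs).image fun p => p.1 :: p.2
  | _, _ => {[]}

open Classical in
/-- Componentwise interval of tree names. -/
noncomputable def treeIcc (a b : List ℕ) : Finset (List ℕ) :=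
  (listIcc a b).filter TreeName

/-- Dendriform addition of tree names: all tree names t with v ↗ w ≤ t ≤ v ↖ w. -/
noncomputable def dplus (v w : List ℕ) : Finset (List ℕ) :=
  treeIcc (overOp v w) (under v w)

open Classical in
/-- The tree with a given name. -/
noncomputable def treeOf (v : List ℕ) : PB :=
  if h : ∃ t : PB, PB.name t = v then h.choose else PB.leaf

/-- The dendriform involution on tree names (mirror image of the tree). -/
noncomputable def dag (v : List ℕ) : List ℕ := PB.name (PB.mirror (treeOf v))

/-- The name of the left subtree of (the tree of) a name. -/
noncomputable def leftN (v : List ℕ) : List ℕ := PB.name (treeOf v).left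

/-- The name of the right subtree of (the tree of) a name. -/
noncomputable def rightN (v : List ℕ) : List ℕ := PB.name (treeOf v).right

/-- Left dendriform operation v ⊣ w := v_l ∨ (v_r ∔ w). -/
noncomputable def dashv (v w : List ℕ) : Finset (List ℕ) :=
  (dplus (rightN v) w).image (graft (leftN v))

/-- Right dendriform operation v ⊢ w := (v ∔ w_l) ∨ w_r. -/
noncomputable def vdash (v w : List ℕ) : Finset (List ℕ) :=
  (dplus v (leftN w)).image (fun u => graft u (rightN w))

/-- The element of the free K-module on tree names given by a grove. -/
noncomputable def groveSum (s : Finset (List ℕ)) : List ℕ →₀ ℤ :=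
  ∑ t ∈ s, Finsupp.single t 1

/-- The bilinear extension of the associative product ⋆. -/
noncomputable def starF (f g : List ℕ →₀ ℤ) : List ℕ →₀ ℤ :=
  f.sum fun v a => g.sum fun w b => (a * b) • groveSum (dplus v w)

/-- The bilinear extension of ≺ (from ⊣). -/
noncomputable def precF (f g : List ℕ →₀ ℤ) : List ℕ →₀ ℤ :=
  f.sum fun a x => g.sum fun b y => (x * y) • groveSum (dashv a b)

/-- The bilinear extension of ≻ (from ⊢). -/
noncomputable def succF (f g : List ℕ →₀ ℤ) : List ℕ →₀ ℤ :=
  f.sum fun a x => g.sum fun b y => (x * y) • groveSum (vdash a b)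

section Part1

lemma length_graft (a b : List ℕ) : (graft a b).length = a.length + b.length + 1 := by
  simp [graft]; omega

lemma graft_assoc' (a b : List ℕ) :
    graft a b = a ++ ([1] ++ List.map (fun x => x + a.length + 1) b) := by
  simp [graft]

lemma graft_getElem?_left {a b : List ℕ} {i : ℕ} (h : i < a.length) :
    (graft a b)[i]? = a[i]? := by
  rw [graft_assoc', List.getElem?_append_left h]

lemma graft_getElem?_root (a b : List ℕ) : (graft a b)[a.length]? = some 1 := by
  rw [graft_assoc', List.getElem?_append_right (le_refl _)]
  simp

lemma graft_getElem?_right {a b : List ℕ} {i : ℕ} (h : a.length < i) :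
    (graft a b)[i]? = b[i - a.length - 1]?.map (fun x => x + a.length + 1) := by
  rw [graft_assoc', List.getElem?_append_right (by omega)]
  have h1 : i - a.length = (i - a.length - 1) + 1 := by omega
  rw [show ([1] ++ List.map (fun x => x + a.length + 1) b)
    = 1 :: List.map (fun x => x + a.length + 1) b from rfl, h1]
  rw [List.getElem?_cons_succ, List.getElem?_map]
  simp

/-- all entries positive -/
def PosL (v : List ℕ) : Prop := ∀ x ∈ v, 1 ≤ x

lemma name_node (l r : PB) : PB.name (PB.node l r) = graft (PB.name l) (PB.name r) := rfl

lemma posL_name : ∀ (t : PB), PosL (PB.name t)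
  | PB.leaf => by simp [PB.name, PosL]
  | PB.node l r => by
    intro x hx
    rw [name_node, graft_assoc'] at hx
    simp only [List.mem_append, List.mem_singleton, List.mem_map, List.mem_cons] at hx
    rcases hx with hx | hx | ⟨a, _, rfl⟩
    · exact posL_name l x hx
    · rcases hx with hx | hx
      · omega
      · simp at hx
    · omega

lemma TreeName.posL {v : List ℕ} (h : TreeName v) : PosL v := by
  obtain ⟨t, rfl⟩ := h; exact posL_name t

lemma PosL.getElem? {v : List ℕ} (h : PosL v) {i : ℕ} {x : ℕ} (hx : v[i]? = some x) :
    1 ≤ x := by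
  apply h
  rw [List.mem_iff_getElem?]
  exact ⟨i, hx⟩

lemma graft_getElem?_right_ge {a b : List ℕ} (hb : PosL b) {i x : ℕ} (h : a.length < i)
    (hx : (graft a b)[i]? = some x) : a.length + 2 ≤ x := by
  rw [graft_getElem?_right h] at hx
  rcases hob : b[i - a.length - 1]? with _ | y
  · rw [hob] at hx; simp at hx
  · rw [hob] at hx
    simp only [Option.map_some] at hx
    have := hb.getElem? hob
    have hxy : y + a.length + 1 = x := by simpa using hx
    omega

lemma name_injective : ∀ {t₁ t₂ : PB}, PB.name t₁ = PB.name t₂ → t₁ = t₂ := by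
  intro t₁
  induction t₁ with
  | leaf =>
    intro t₂ h
    cases t₂ with
    | leaf => rfl
    | node l r =>
      exfalso
      have := congrArg List.length h
      rw [name_node, length_graft] at this
      simp [PB.name] at this
  | node l r ihl ihr =>
    intro t₂ h
    cases t₂ with
    | leaf =>
      exfalso
      have := congrArg List.length h
      rw [name_node, length_graft] at this
      simp [PB.name] at this
    | node l₂ r₂ =>
      rw [name_node, name_node] at h
      have key : ∀ (p q s u : List ℕ), PosL q → PosL u → graft p q = graft s u →
          ¬ (p.length < s.length) := by
        intro p q s u hq _ hpq hlt
        have h1 : (graft s u)[s.length]? = some 1 := graft_getElem?_root s u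
        rw [← hpq] at h1
        have := graft_getElem?_right_ge hq hlt h1
        omega
      have hlen : (PB.name l).length = (PB.name l₂).length := by
        rcases Nat.lt_trichotomy (PB.name l).length (PB.name l₂).length with hlt | he | hgt
        · exact absurd hlt (key _ _ _ _ (posL_name r) (posL_name r₂) h)
        · exact he
        · exact absurd hgt (key _ _ _ _ (posL_name r₂) (posL_name r) h.symm)
      have h' := List.append_inj (by simpa [graft_assoc'] using h) hlen
      obtain ⟨hl2, hr2⟩ := h'
      rw [hlen] at hr2
      have hr3 : List.map (fun x => x + (PB.name l₂).length + 1) (PB.name r)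
          = List.map (fun x => x + (PB.name l₂).length + 1) (PB.name r₂) := by
        simpa using hr2
      have hr4 : PB.name r = PB.name r₂ := by
        have hinj : Function.Injective (fun x : ℕ => x + (PB.name l₂).length + 1) := by
          intro x y hxy; simpa using hxy
        exact List.map_injective_iff.mpr hinj hr3
      rw [ihl hl2, ihr hr4]

lemma treeOf_name (t : PB) : treeOf (PB.name t) = t := by
  unfold treeOf
  rw [dif_pos ⟨t, rfl⟩]
  exact name_injective (⟨t, rfl⟩ : ∃ s : PB, PB.name s = PB.name t).choose_spec

lemma name_treeOf {v : List ℕ} (h : TreeName v) : PB.name (treeOf v) = v := by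
  obtain ⟨t, rfl⟩ := h
  rw [treeOf_name]

lemma TreeName.graft {a b : List ℕ} (ha : TreeName a) (hb : TreeName b) :
    TreeName (graft a b) := by
  obtain ⟨s, rfl⟩ := ha; obtain ⟨u, rfl⟩ := hb
  exact ⟨PB.node s u, rfl⟩

lemma leftN_graft {a b : List ℕ} (ha : TreeName a) (hb : TreeName b) :
    leftN (graft a b) = a := by
  obtain ⟨s, rfl⟩ := ha; obtain ⟨u, rfl⟩ := hb
  rw [leftN, ← name_node, treeOf_name]; rfl

lemma rightN_graft {a b : List ℕ} (ha : TreeName a) (hb : TreeName b) :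
    rightN (graft a b) = b := by
  obtain ⟨s, rfl⟩ := ha; obtain ⟨u, rfl⟩ := hb
  rw [rightN, ← name_node, treeOf_name]; rfl

lemma treeName_decomp {t : List ℕ} (h : TreeName t) (h0 : t ≠ []) :
    t = graft (leftN t) (rightN t) ∧ TreeName (leftN t) ∧ TreeName (rightN t) := by
  obtain ⟨s, rfl⟩ := h
  cases s with
  | leaf => simp [PB.name] at h0
  | node l r =>
    rw [name_node, leftN_graft ⟨l, rfl⟩ ⟨r, rfl⟩, rightN_graft ⟨l, rfl⟩ ⟨r, rfl⟩]
    exact ⟨rfl, ⟨l, rfl⟩, ⟨r, rfl⟩⟩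

lemma graft_right_inj {a b c : List ℕ} (h : graft a b = graft a c) : b = c := by
  rw [graft_assoc', graft_assoc'] at h
  have h1 := (List.append_inj h rfl).2
  have h2 : List.map (fun x => x + a.length + 1) b = List.map (fun x => x + a.length + 1) c := by
    simpa using h1
  have hinj : Function.Injective (fun x : ℕ => x + a.length + 1) := by
    intro x y hxy; simpa using hxy
  exact List.map_injective_iff.mpr hinj h2

lemma graft_left_inj_of_len {a b c : List ℕ} (hlen : a.length = c.length)
    (h : graft a b = graft c b) : a = c := by
  rw [graft_assoc', graft_assoc'] at h
  exact (List.append_inj h hlen).1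

lemma graft_left_len_eq {a b c d : List ℕ} (hb : PosL b) (hd : PosL d)
    (h : graft a b = graft c d) : a.length = c.length := by
  have key : ∀ (p q s u : List ℕ), PosL q → graft p q = graft s u →
      ¬ (p.length < s.length) := by
    intro p q s u hq hpq hlt
    have h1 : (graft s u)[s.length]? = some 1 := graft_getElem?_root s u
    rw [← hpq] at h1
    have := graft_getElem?_right_ge hq hlt h1
    omega
  rcases Nat.lt_trichotomy a.length c.length with hlt | he | hgt
  · exact absurd hlt (key _ _ _ _ hb h)
  · exact he
  · exact absurd hgt (key _ _ _ _ hd h.symm)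

end Part1
section Part2

lemma mem_listIcc : ∀ (a b t : List ℕ), a.length = b.length →
    (t ∈ listIcc a b ↔ t.length = a.length ∧
      ∀ (i xa xt xb : ℕ), a[i]? = some xa → t[i]? = some xt → b[i]? = some xb →
        xa ≤ xt ∧ xt ≤ xb) := by
  intro a
  induction a with
  | nil =>
    intro b t hb
    have : b = [] := List.eq_nil_of_length_eq_zero hb.symm
    subst this
    show t ∈ ({[]} : Finset (List ℕ)) ↔ _
    rw [Finset.mem_singleton]
    constructor
    · rintro rfl
      refine ⟨rfl, ?_⟩
      intro i xa xt xb ha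
      simp at ha
    · rintro ⟨h1, _⟩
      exact List.eq_nil_of_length_eq_zero h1
  | cons a₀ as ih =>
    intro b t hb
    cases b with
    | nil => simp at hb
    | cons b₀ bs =>
      show t ∈ Finset.image _ _ ↔ _
      rw [Finset.mem_image]
      simp only [Finset.mem_product, Finset.mem_Icc] at *
      constructor
      · rintro ⟨⟨x, xs⟩, ⟨⟨hx1, hx2⟩, hxs⟩, rfl⟩
        have hxs' := (ih bs xs (by simpa using hb)).mp hxs
        refine ⟨by simp [hxs'.1], ?_⟩
        intro i xa xt xb ha ht hbb
        cases i with
        | zero =>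
          simp only [List.getElem?_cons_zero, Option.some.injEq] at ha ht hbb
          omega
        | succ n =>
          simp only [List.getElem?_cons_succ] at ha ht hbb
          exact hxs'.2 n xa xt xb ha ht hbb
      · rintro ⟨hlen, hcond⟩
        cases t with
        | nil => simp at hlen
        | cons t₀ ts =>
          refine ⟨⟨t₀, ts⟩, ⟨?_, ?_⟩, rfl⟩
          · exact hcond 0 a₀ t₀ b₀ (by simp) (by simp) (by simp)
          · rw [ih bs ts (by simpa using hb)]
            refine ⟨by simpa using hlen, ?_⟩
            intro i xa xt xb ha ht hbb
            exact hcond (i+1) xa xt xb (by simpa using ha) (by simpa using ht)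
              (by simpa using hbb)

lemma length_over (v w : List ℕ) : (overOp v w).length = v.length + w.length := by
  simp [overOp, rsh]

lemma length_under (v w : List ℕ) : (under v w).length = v.length + w.length := by
  simp [under]

lemma over_getElem?_left {v w : List ℕ} {i : ℕ} (h : i < v.length) :
    (overOp v w)[i]? = v[i]? := List.getElem?_append_left h

lemma under_getElem?_left {v w : List ℕ} {i : ℕ} (h : i < v.length) :
    (under v w)[i]? = v[i]? := List.getElem?_append_left h

lemma over_getElem?_right (v w : List ℕ) (j : ℕ) :
    (overOp v w)[v.length + j]? = w[j]?.map (fun x => if x = 1 then 1 else x + v.length) := by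
  rw [overOp, List.getElem?_append_right (by omega)]
  simp [rsh, List.getElem?_map]

lemma under_getElem?_right (v w : List ℕ) (j : ℕ) :
    (under v w)[v.length + j]? = w[j]?.map (fun x => x + v.length) := by
  rw [under, List.getElem?_append_right (by omega)]
  simp [List.getElem?_map]

/-- The membership bounds in `dplus v w` in pointwise form. -/
def Bnd (v w t : List ℕ) : Prop :=
  t.length = v.length + w.length ∧
  (∀ i, i < v.length → t[i]? = v[i]?) ∧
  (∀ j x y, w[j]? = some x → t[v.length + j]? = some y →
    (x = 1 → 1 ≤ y ∧ y ≤ v.length + 1) ∧ (x ≠ 1 → y = x + v.length))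

lemma mem_dplus_iff {v w t : List ℕ} : t ∈ dplus v w ↔ TreeName t ∧ Bnd v w t := by
  classical
  simp only [dplus, treeIcc, Finset.mem_filter]
  rw [mem_listIcc _ _ _ (by rw [length_over, length_under]), length_over]
  constructor
  · rintro ⟨⟨hlen, hcond⟩, htn⟩
    refine ⟨htn, hlen, ?_, ?_⟩
    · intro i hi
      have hit : i < t.length := by omega
      have hiv : i < v.length := hi
      obtain ⟨xv, hxv⟩ : ∃ xv, v[i]? = some xv := ⟨v[i], List.getElem?_eq_getElem hiv⟩
      have hcnd := hcond i xv t[i] xv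
        (by rw [over_getElem?_left hi]; exact hxv)
        (List.getElem?_eq_getElem hit)
        (by rw [under_getElem?_left hi]; exact hxv)
      rw [List.getElem?_eq_getElem hit, hxv]
      exact congrArg some (le_antisymm hcnd.2 hcnd.1)
    · intro j x y hx hy
      have hcnd := hcond (v.length + j) (if x = 1 then 1 else x + v.length) y (x + v.length)
        (by rw [over_getElem?_right, hx]; rfl)
        hy
        (by rw [under_getElem?_right, hx]; rfl)
      constructor
      · intro h1
        rw [if_pos h1] at hcnd
        subst h1
        omega
      · intro h1
        rw [if_neg h1] at hcnd
        omega
  · rintro ⟨htn, hlen, hpre, hw⟩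
    refine ⟨⟨hlen, ?_⟩, htn⟩
    intro i xa xt xb ha ht hbb
    rcases Nat.lt_or_ge i v.length with hi | hi
    · rw [over_getElem?_left hi] at ha
      rw [under_getElem?_left hi] at hbb
      rw [hpre i hi, ha] at ht
      rw [ha] at hbb
      have h1 : xt = xa := by simpa using ht.symm
      have h2 : xa = xb := by simpa using hbb
      omega
    · obtain ⟨j, rfl⟩ : ∃ j, i = v.length + j := ⟨i - v.length, by omega⟩
      obtain ⟨x, hx⟩ : ∃ x, w[j]? = some x := by
        rcases how : w[j]? with _ | x
        · rw [over_getElem?_right, how] at ha; simp at ha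
        · exact ⟨x, rfl⟩
      rw [over_getElem?_right, hx] at ha
      rw [under_getElem?_right, hx] at hbb
      have ha' : (if x = 1 then 1 else x + v.length) = xa := by simpa using ha
      have hbb' : x + v.length = xb := by simpa using hbb
      have hcnd := hw j x xt hx ht
      by_cases h1 : x = 1
      · have := hcnd.1 h1
        rw [if_pos h1] at ha'
        omega
      · have := hcnd.2 h1
        rw [if_neg h1] at ha'
        omega

lemma mem_dplus_treeName {v w t : List ℕ} (h : t ∈ dplus v w) : TreeName t :=
  (mem_dplus_iff.mp h).1

lemma mem_dplus_length {v w t : List ℕ} (h : t ∈ dplus v w) :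
    t.length = v.length + w.length := (mem_dplus_iff.mp h).2.1

lemma dplus_nil_left {w : List ℕ} (hw : TreeName w) : dplus [] w = {w} := by
  ext t
  rw [mem_dplus_iff, Finset.mem_singleton]
  constructor
  · rintro ⟨htn, hlen, _, hw'⟩
    apply List.ext_getElem?
    intro n
    rcases Nat.lt_or_ge n w.length with hn | hn
    · obtain ⟨x, hx⟩ : ∃ x, w[n]? = some x := ⟨w[n], List.getElem?_eq_getElem hn⟩
      obtain ⟨y, hy⟩ : ∃ y, t[n]? = some y :=
        ⟨t[n]'(by simp at hlen; omega), List.getElem?_eq_getElem (by simp at hlen; omega)⟩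
      have := hw' n x y hx (by simpa using hy)
      rw [hx, hy]
      refine congrArg some ?_
      by_cases h1 : x = 1
      · have h2 := this.1 h1
        simp only [List.length_nil] at h2
        omega
      · have h2 := this.2 h1
        simp only [List.length_nil] at h2
        omega
    · rw [List.getElem?_eq_none (by simp at hlen; omega), List.getElem?_eq_none hn]
  · rintro rfl
    refine ⟨hw, by simp, by simp, ?_⟩
    intro j x y hx hy
    simp only [List.length_nil, Nat.zero_add] at hy
    rw [hx] at hy
    have : x = y := by simpa using hy
    subst this
    constructor
    · intro h1
      simp only [List.length_nil]
      omega
    · intro h1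
      simp only [List.length_nil]
      omega

lemma dplus_nil_right {v : List ℕ} (hv : TreeName v) : dplus v [] = {v} := by
  ext t
  rw [mem_dplus_iff, Finset.mem_singleton]
  constructor
  · rintro ⟨htn, hlen, hpre, _⟩
    apply List.ext_getElem?
    intro n
    rcases Nat.lt_or_ge n v.length with hn | hn
    · exact hpre n hn
    · rw [List.getElem?_eq_none (by simp at hlen; omega), List.getElem?_eq_none hn]
  · rintro rfl
    refine ⟨hv, by simp, fun i _ => rfl, ?_⟩
    intro j x y hx
    simp at hx

end Part2
section Part3

lemma getElem?_some_of_lt {t : List ℕ} {i : ℕ} (h : i < t.length) : ∃ y, t[i]? = some y :=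
  ⟨t[i], List.getElem?_eq_getElem h⟩

lemma graft_getElem?_right' {a b : List ℕ} (j : ℕ) :
    (graft a b)[a.length + 1 + j]? = b[j]?.map (fun x => x + a.length + 1) := by
  rw [graft_getElem?_right (by omega)]
  have h : a.length + 1 + j - a.length - 1 = j := by omega
  rw [h]

lemma treeName_decomp' {t : List ℕ} (h : TreeName t) (h0 : t ≠ []) :
    ∃ a c, TreeName a ∧ TreeName c ∧ t = graft a c := by
  obtain ⟨heq, h1, h2⟩ := treeName_decomp h h0
  exact ⟨leftN t, rightN t, h1, h2, heq⟩

lemma graft_ne_nil (a c : List ℕ) : graft a c ≠ [] := by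
  intro h
  have := congrArg List.length h
  rw [length_graft] at this
  simp at this

lemma dashv_graft {a c : List ℕ} (ha : TreeName a) (hc : TreeName c) (w : List ℕ) :
    dashv (graft a c) w = (dplus c w).image (graft a) := by
  rw [dashv, leftN_graft ha hc, rightN_graft ha hc]

lemma vdash_graft {d e : List ℕ} (hd : TreeName d) (he : TreeName e) (v : List ℕ) :
    vdash v (graft d e) = (dplus v d).image (fun u => graft u e) := by
  rw [vdash, leftN_graft hd he, rightN_graft hd he]

lemma dashv_subset_dplus {v w : List ℕ} (hv : TreeName v) (hv0 : v ≠ []) (hw : TreeName w) :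
    dashv v w ⊆ dplus v w := by
  obtain ⟨a, c, ha, hc, rfl⟩ := treeName_decomp' hv hv0
  intro t ht
  rw [dashv_graft ha hc, Finset.mem_image] at ht
  obtain ⟨u, hu, rfl⟩ := ht
  obtain ⟨hutn, hulen, hupre, huw⟩ := mem_dplus_iff.mp hu
  have hvlen : (graft a c).length = a.length + c.length + 1 := length_graft a c
  rw [mem_dplus_iff]
  refine ⟨TreeName.graft ha hutn, ?_, ?_, ?_⟩
  · rw [length_graft, length_graft]; omega
  · intro i hi
    rw [hvlen] at hi
    rcases Nat.lt_trichotomy i a.length with hia | hia | hia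
    · rw [graft_getElem?_left hia, graft_getElem?_left hia]
    · subst hia
      rw [graft_getElem?_root, graft_getElem?_root]
    · rw [graft_getElem?_right hia, graft_getElem?_right hia]
      rw [hupre _ (by omega)]
  · intro j x y hx hy
    rw [graft_getElem?_right (by omega)] at hy
    have hidx : (graft a c).length + j - a.length - 1 = c.length + j := by omega
    rw [hidx] at hy
    obtain ⟨y', hy'⟩ : ∃ y', u[c.length + j]? = some y' := by
      rcases h : u[c.length + j]? with _ | y'
      · rw [h] at hy; simp at hy
      · exact ⟨y', rfl⟩
    rw [hy'] at hy
    have hyy : y = y' + a.length + 1 := by simpa using hy.symm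
    have hcnd := huw j x y' hx hy'
    constructor
    · intro h1
      have := hcnd.1 h1
      omega
    · intro h1
      have := hcnd.2 h1
      omega

lemma vdash_subset_dplus {v w : List ℕ} (hv : TreeName v) (hw : TreeName w) (hw0 : w ≠ []) :
    vdash v w ⊆ dplus v w := by
  obtain ⟨d, e, hd, he, rfl⟩ := treeName_decomp' hw hw0
  intro t ht
  rw [vdash_graft hd he, Finset.mem_image] at ht
  obtain ⟨u, hu, rfl⟩ := ht
  obtain ⟨hutn, hulen, hupre, hud⟩ := mem_dplus_iff.mp hu
  have hwlen : (graft d e).length = d.length + e.length + 1 := length_graft d e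
  rw [mem_dplus_iff]
  refine ⟨TreeName.graft hutn he, ?_, ?_, ?_⟩
  · rw [length_graft]; omega
  · intro i hi
    rw [graft_getElem?_left (by omega)]
    exact hupre i (by omega)
  · intro j x y hx hy
    rcases Nat.lt_trichotomy j d.length with hjd | hjd | hjd
    · have hxd : d[j]? = some x := by
        rw [graft_getElem?_left hjd] at hx
        exact hx
      have hyu : u[v.length + j]? = some y := by
        rw [graft_getElem?_left (by omega)] at hy
        exact hy
      have hcnd := hud j x y hxd hyu
      constructor
      · intro h1
        have := hcnd.1 h1
        omega
      · intro h1
        have := hcnd.2 h1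
        omega
    · subst hjd
      have hx1 : x = 1 := by
        rw [graft_getElem?_root] at hx
        simpa using hx.symm
      have hy1 : y = 1 := by
        have hidx : v.length + d.length = u.length := by omega
        rw [hidx, graft_getElem?_root] at hy
        simpa using hy.symm
      subst hx1; subst hy1
      exact ⟨fun _ => ⟨le_refl 1, by omega⟩, fun h1 => absurd rfl h1⟩
    · obtain ⟨xe, hxe⟩ : ∃ xe, e[j - d.length - 1]? = some xe := by
        rcases h : e[j - d.length - 1]? with _ | xe
        · rw [graft_getElem?_right hjd, h] at hx; simp at hx
        · exact ⟨xe, rfl⟩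
      have hxval : x = xe + d.length + 1 := by
        rw [graft_getElem?_right hjd, hxe] at hx
        simpa using hx.symm
      have hyval : y = xe + u.length + 1 := by
        rw [graft_getElem?_right (by omega)] at hy
        have hidx : v.length + j - u.length - 1 = j - d.length - 1 := by omega
        rw [hidx, hxe] at hy
        simpa using hy.symm
      constructor
      · intro h1; omega
      · intro _; omega

lemma mem_dplus_split {v w t : List ℕ} (hv : TreeName v) (hw : TreeName w)
    (hv0 : v ≠ []) (hw0 : w ≠ []) (ht : t ∈ dplus v w) :
    t ∈ dashv v w ∨ t ∈ vdash v w := by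
  obtain ⟨a, c, ha, hc, rfl⟩ := treeName_decomp' hv hv0
  obtain ⟨d, e, hd, he, rfl⟩ := treeName_decomp' hw hw0
  obtain ⟨httn, hlen, hpre, hwc⟩ := mem_dplus_iff.mp ht
  have hvlen : (graft a c).length = a.length + c.length + 1 := length_graft a c
  have hwlen : (graft d e).length = d.length + e.length + 1 := length_graft d e
  have ht0 : t ≠ [] := by
    intro h
    rw [h] at hlen
    simp at hlen
    omega
  obtain ⟨l, r, hl, hr, rfl⟩ := treeName_decomp' httn ht0
  have htlen : (graft l r).length = l.length + r.length + 1 := length_graft l r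
  have htroot : (graft l r)[l.length]? = some 1 := graft_getElem?_root _ _
  have htafter : ∀ i z, l.length < i → (graft l r)[i]? = some z → l.length + 2 ≤ z :=
    fun i z hi hz => graft_getElem?_right_ge hr.posL hi hz
  rcases Nat.lt_or_ge l.length (graft a c).length with hR | hR
  · -- root inside v : dashv case
    left
    have hRa : l.length = a.length := by
      rcases Nat.lt_trichotomy l.length a.length with h1 | h1 | h1
      · exfalso
        have hv1 : (graft a c)[a.length]? = some 1 := graft_getElem?_root _ _
        have ht1 : (graft l r)[a.length]? = some 1 := by
          rw [hpre _ (by omega)]; exact hv1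
        have := htafter _ _ h1 ht1
        omega
      · exact h1
      · exfalso
        have hv1 : (graft a c)[l.length]? = some 1 := by rw [← hpre _ hR]; exact htroot
        have := graft_getElem?_right_ge hc.posL h1 hv1
        omega
    have hla : l = a := by
      apply List.ext_getElem?
      intro n
      rcases Nat.lt_or_ge n l.length with hn | hn
      · have h1 : (graft l r)[n]? = l[n]? := graft_getElem?_left hn
        have h2 : (graft a c)[n]? = a[n]? := graft_getElem?_left (by omega)
        rw [← h1, ← h2]
        exact hpre n (by omega)
      · rw [List.getElem?_eq_none hn, List.getElem?_eq_none (by omega)]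
    have hrmem : r ∈ dplus c (graft d e) := by
      rw [mem_dplus_iff]
      refine ⟨hr, by omega, ?_, ?_⟩
      · intro i hi
        obtain ⟨yr, hyr⟩ := getElem?_some_of_lt (show i < r.length by omega)
        obtain ⟨yc, hyc⟩ := getElem?_some_of_lt (show i < c.length by omega)
        have h1 : (graft l r)[l.length + 1 + i]? = some (yr + l.length + 1) := by
          rw [graft_getElem?_right' i, hyr]; rfl
        have h2 : (graft a c)[a.length + 1 + i]? = some (yc + a.length + 1) := by
          rw [graft_getElem?_right' i, hyc]; rfl
        rw [hRa] at h1
        rw [hpre _ (by omega), h2] at h1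
        rw [hyr, hyc]
        have : yr = yc := by
          have := Option.some.inj h1
          omega
        rw [this]
      · intro j x y hx hy
        have h1 : (graft l r)[(graft a c).length + j]? = some (y + l.length + 1) := by
          have hidx : (graft a c).length + j = l.length + 1 + (c.length + j) := by omega
          rw [hidx, graft_getElem?_right' _, hy]; rfl
        have hcnd := hwc j x _ hx h1
        have hposr : 1 ≤ y := hr.posL.getElem? hy
        constructor
        · intro h1'
          have := hcnd.1 h1'
          omega
        · intro h1'
          have := hcnd.2 h1'
          omega
    rw [dashv_graft ha hc, Finset.mem_image]
    exact ⟨r, hrmem, by rw [hla]⟩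
  · -- root inside w : vdash case
    right
    have hj₀lt : l.length - (graft a c).length < (graft d e).length := by omega
    obtain ⟨x₀, hx₀⟩ := getElem?_some_of_lt hj₀lt
    have hx₀1 : x₀ = 1 := by
      have hroot' : (graft l r)[(graft a c).length + (l.length - (graft a c).length)]? = some 1 := by
        have hidx : (graft a c).length + (l.length - (graft a c).length) = l.length := by omega
        rw [hidx]; exact htroot
      have hcnd := hwc _ x₀ 1 hx₀ hroot'
      have hpos := (TreeName.graft hd he).posL.getElem? hx₀
      by_contra hne
      have := hcnd.2 hne
      omega
    have hj₀d : l.length - (graft a c).length = d.length := by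
      rcases Nat.lt_trichotomy (l.length - (graft a c).length) d.length with h1 | h1 | h1
      · exfalso
        have hw1 : (graft d e)[d.length]? = some 1 := graft_getElem?_root _ _
        obtain ⟨y₁, hy₁⟩ := getElem?_some_of_lt
          (show (graft a c).length + d.length < (graft l r).length by omega)
        have hcnd := hwc d.length 1 y₁ hw1 hy₁
        have hup := (hcnd.1 rfl).2
        have := htafter _ _ (by omega) hy₁
        omega
      · exact h1
      · exfalso
        have := graft_getElem?_right_ge he.posL h1 hx₀
        omega
    have hRl : l.length = (graft a c).length + d.length := by omega
    have hre : r = e := by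
      apply List.ext_getElem?
      intro n
      rcases Nat.lt_or_ge n e.length with hn | hn
      · obtain ⟨yr, hyr⟩ := getElem?_some_of_lt (show n < r.length by omega)
        obtain ⟨ye, hye⟩ := getElem?_some_of_lt hn
        have hwn : (graft d e)[d.length + 1 + n]? = some (ye + d.length + 1) := by
          rw [graft_getElem?_right' n, hye]; rfl
        have htn : (graft l r)[(graft a c).length + (d.length + 1 + n)]? =
            some (yr + l.length + 1) := by
          have hidx : (graft a c).length + (d.length + 1 + n) = l.length + 1 + n := by omega
          rw [hidx, graft_getElem?_right' n, hyr]; rfl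
        have hcnd := hwc _ _ _ hwn htn
        have hval := hcnd.2 (by have := he.posL.getElem? hye; omega)
        rw [hyr, hye]
        have : yr = ye := by omega
        rw [this]
      · rw [List.getElem?_eq_none (by omega), List.getElem?_eq_none hn]
    have hlmem : l ∈ dplus (graft a c) d := by
      rw [mem_dplus_iff]
      refine ⟨hl, by omega, ?_, ?_⟩
      · intro i hi
        have h1 : (graft l r)[i]? = l[i]? := graft_getElem?_left (by omega)
        rw [← h1]
        exact hpre i hi
      · intro j x y hx hy
        have hjd : j < d.length := by
          by_contra hge
          rw [List.getElem?_eq_none (by omega)] at hx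
          simp at hx
        have hwj : (graft d e)[j]? = some x := by
          rw [graft_getElem?_left hjd]
          exact hx
        have htj : (graft l r)[(graft a c).length + j]? = some y := by
          rw [graft_getElem?_left (by omega)]
          exact hy
        exact hwc j x y hwj htj
    rw [vdash_graft hd he, Finset.mem_image]
    exact ⟨l, hlmem, by rw [hre]⟩

lemma dashv_vdash_disjoint {v w : List ℕ} (hv : TreeName v) (hw : TreeName w)
    (hv0 : v ≠ []) (hw0 : w ≠ []) : Disjoint (dashv v w) (vdash v w) := by
  obtain ⟨a, c, ha, hc, rfl⟩ := treeName_decomp' hv hv0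
  obtain ⟨d, e, hd, he, rfl⟩ := treeName_decomp' hw hw0
  rw [Finset.disjoint_left]
  intro t ht1 ht2
  rw [dashv_graft ha hc, Finset.mem_image] at ht1
  rw [vdash_graft hd he, Finset.mem_image] at ht2
  obtain ⟨u, hu, hueq⟩ := ht1
  obtain ⟨u', hu', hu'eq⟩ := ht2
  have h := hueq.trans hu'eq.symm
  have hlen := graft_left_len_eq (mem_dplus_treeName hu).posL he.posL h
  have h1 := mem_dplus_length hu'
  have hvlen : (graft a c).length = a.length + c.length + 1 := length_graft a c
  omega

lemma dplus_eq_union {v w : List ℕ} (hv : TreeName v) (hw : TreeName w)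
    (hv0 : v ≠ []) (hw0 : w ≠ []) : dplus v w = dashv v w ∪ vdash v w := by
  ext t
  rw [Finset.mem_union]
  constructor
  · exact mem_dplus_split hv hw hv0 hw0
  · rintro (h | h)
    · exact dashv_subset_dplus hv hv0 hw h
    · exact vdash_subset_dplus hv hw hw0 h

end Part3
section Part4

lemma groveSum_union {S T : Finset (List ℕ)} (h : Disjoint S T) :
    groveSum (S ∪ T) = groveSum S + groveSum T := by
  rw [groveSum, groveSum, groveSum, Finset.sum_union h]

lemma groveSum_image {f : List ℕ → List ℕ} {S : Finset (List ℕ)}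
    (h : ∀ x ∈ S, ∀ y ∈ S, f x = f y → x = y) :
    groveSum (S.image f) = Finsupp.mapDomain f (groveSum S) := by
  rw [groveSum, groveSum, Finsupp.mapDomain_finset_sum, Finset.sum_image h]
  exact Finset.sum_congr rfl fun t _ => Finsupp.mapDomain_single.symm

lemma precF_single_single (a b : List ℕ) :
    precF (Finsupp.single a (1 : ℤ)) (Finsupp.single b 1) = groveSum (dashv a b) := by
  rw [precF, Finsupp.sum_single_index (by simp [Finsupp.sum]),
    Finsupp.sum_single_index (by simp)]
  simp

lemma succF_single_single (a b : List ℕ) :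
    succF (Finsupp.single a (1 : ℤ)) (Finsupp.single b 1) = groveSum (vdash a b) := by
  rw [succF, Finsupp.sum_single_index (by simp [Finsupp.sum]),
    Finsupp.sum_single_index (by simp)]
  simp

lemma precF_add_right (f g h : List ℕ →₀ ℤ) : precF f (g + h) = precF f g + precF f h := by
  unfold precF
  rw [← Finsupp.sum_add]
  congr 1
  ext a x
  rw [Finsupp.sum_add_index' (fun b => by simp) (fun b y₁ y₂ => by rw [mul_add, add_smul])]

lemma succF_add_right (f g h : List ℕ →₀ ℤ) : succF f (g + h) = succF f g + succF f h := by
  unfold succF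
  rw [← Finsupp.sum_add]
  congr 1
  ext a x
  rw [Finsupp.sum_add_index' (fun b => by simp) (fun b y₁ y₂ => by rw [mul_add, add_smul])]

lemma precF_add_left (f g h : List ℕ →₀ ℤ) : precF (f + g) h = precF f h + precF g h := by
  unfold precF
  rw [Finsupp.sum_add_index' (fun a => by simp [Finsupp.sum]) (fun a x₁ x₂ => ?_)]
  rw [← Finsupp.sum_add]
  congr 1
  ext b y
  rw [add_mul, add_smul]

lemma succF_add_left (f g h : List ℕ →₀ ℤ) : succF (f + g) h = succF f h + succF g h := by
  unfold succF
  rw [Finsupp.sum_add_index' (fun a => by simp [Finsupp.sum]) (fun a x₁ x₂ => ?_)]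
  rw [← Finsupp.sum_add]
  congr 1
  ext b y
  rw [add_mul, add_smul]

lemma precF_single_groveSum (x : List ℕ) (S : Finset (List ℕ)) :
    precF (Finsupp.single x (1 : ℤ)) (groveSum S) = ∑ t ∈ S, groveSum (dashv x t) := by
  classical
  induction S using Finset.induction with
  | empty => simp [groveSum, precF]
  | @insert a S ha ih =>
    rw [groveSum, Finset.sum_insert ha, ← groveSum, precF_add_right, ih,
      precF_single_single, Finset.sum_insert ha]

lemma succF_single_groveSum (x : List ℕ) (S : Finset (List ℕ)) :
    succF (Finsupp.single x (1 : ℤ)) (groveSum S) = ∑ t ∈ S, groveSum (vdash x t) := by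
  classical
  induction S using Finset.induction with
  | empty => simp [groveSum, succF]
  | @insert a S ha ih =>
    rw [groveSum, Finset.sum_insert ha, ← groveSum, succF_add_right, ih,
      succF_single_single, Finset.sum_insert ha]

lemma precF_groveSum_single (S : Finset (List ℕ)) (z : List ℕ) :
    precF (groveSum S) (Finsupp.single z (1 : ℤ)) = ∑ t ∈ S, groveSum (dashv t z) := by
  classical
  induction S using Finset.induction with
  | empty => simp [groveSum, precF, Finsupp.sum]
  | @insert a S ha ih =>
    rw [groveSum, Finset.sum_insert ha, ← groveSum, precF_add_left, ih,
      precF_single_single, Finset.sum_insert ha]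

lemma succF_groveSum_single (S : Finset (List ℕ)) (z : List ℕ) :
    succF (groveSum S) (Finsupp.single z (1 : ℤ)) = ∑ t ∈ S, groveSum (vdash t z) := by
  classical
  induction S using Finset.induction with
  | empty => simp [groveSum, succF, Finsupp.sum]
  | @insert a S ha ih =>
    rw [groveSum, Finset.sum_insert ha, ← groveSum, succF_add_left, ih,
      succF_single_single, Finset.sum_insert ha]

end Part4
section Part5

/-- multiset associativity statement -/
def AS (v w t : List ℕ) : Prop :=
  ∑ u ∈ dplus v w, groveSum (dplus u t) = ∑ s ∈ dplus w t, groveSum (dplus v s)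

lemma mem_dplus_ne_nil {u v w : List ℕ} (h : u ∈ dplus v w) (hv0 : v ≠ []) : u ≠ [] := by
  have h1 := mem_dplus_length h
  have hv1 : 0 < v.length := List.length_pos_iff.mpr hv0
  intro h2
  rw [h2] at h1
  simp only [List.length_nil] at h1
  omega

lemma T1 {a c w t : List ℕ} (ha : TreeName a) (hc : TreeName c)
    (hA : AS c w t) :
    ∑ u ∈ dashv (graft a c) w, groveSum (dashv u t)
      = ∑ s ∈ dplus w t, groveSum (dashv (graft a c) s) := by
  have hinj : ∀ S : Finset (List ℕ), ∀ x ∈ S, ∀ y ∈ S, graft a x = graft a y → x = y :=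
    fun S x _ y _ h => graft_right_inj h
  rw [dashv_graft ha hc, Finset.sum_image (hinj _)]
  have step : ∀ u' ∈ dplus c w, groveSum (dashv (graft a u') t)
      = Finsupp.mapDomain (graft a) (groveSum (dplus u' t)) := by
    intro u' hu'
    rw [dashv_graft ha (mem_dplus_treeName hu'), groveSum_image (hinj _)]
  rw [Finset.sum_congr rfl step, ← Finsupp.mapDomain_finset_sum, hA,
    Finsupp.mapDomain_finset_sum]
  refine Finset.sum_congr rfl fun s hs => ?_
  rw [dashv_graft ha hc, groveSum_image (hinj _)]

lemma T2 {v d e t : List ℕ} (hv : TreeName v) (hd : TreeName d) (he : TreeName e) :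
    ∑ u ∈ vdash v (graft d e), groveSum (dashv u t)
      = ∑ s ∈ dashv (graft d e) t, groveSum (vdash v s) := by
  have hinjL : ∀ x ∈ dplus v d, ∀ y ∈ dplus v d, graft x e = graft y e → x = y := by
    intro x hx y hy h
    exact graft_left_inj_of_len (by rw [mem_dplus_length hx, mem_dplus_length hy]) h
  have hinjR : ∀ (b : List ℕ), ∀ S : Finset (List ℕ), ∀ x ∈ S, ∀ y ∈ S,
      graft b x = graft b y → x = y := fun b S x _ y _ h => graft_right_inj h
  rw [vdash_graft hd he, Finset.sum_image hinjL, dashv_graft hd he, Finset.sum_image (hinjR d _)]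
  have step1 : ∀ u ∈ dplus v d, groveSum (dashv (graft u e) t)
      = ∑ s ∈ dplus e t, Finsupp.single (graft u s) (1 : ℤ) := by
    intro u hu
    rw [dashv_graft (mem_dplus_treeName hu) he, groveSum,
      Finset.sum_image (hinjR u _)]
  have step2 : ∀ s ∈ dplus e t, groveSum (vdash v (graft d s))
      = ∑ u ∈ dplus v d, Finsupp.single (graft u s) (1 : ℤ) := by
    intro s hs
    have hinj : ∀ x ∈ dplus v d, ∀ y ∈ dplus v d, graft x s = graft y s → x = y := by
      intro x hx y hy h
      exact graft_left_inj_of_len (by rw [mem_dplus_length hx, mem_dplus_length hy]) h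
    rw [vdash_graft hd (mem_dplus_treeName hs), groveSum, Finset.sum_image hinj]
  rw [Finset.sum_congr rfl step1, Finset.sum_congr rfl step2]
  exact Finset.sum_comm

lemma T3 {v w d e : List ℕ} (hd : TreeName d) (he : TreeName e)
    (hA : AS v w d) :
    ∑ u ∈ dplus v w, groveSum (vdash u (graft d e))
      = ∑ s ∈ vdash w (graft d e), groveSum (vdash v s) := by
  have hinj : ∀ S : Finset (List ℕ), (∀ x ∈ S, ∀ y ∈ S, x.length = y.length) →
      ∀ x ∈ S, ∀ y ∈ S, graft x e = graft y e → x = y := by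
    intro S hS x hx y hy h
    exact graft_left_inj_of_len (hS x hx y hy) h
  have hlen1 : ∀ A B : List ℕ, ∀ x ∈ dplus A B, ∀ y ∈ dplus A B, x.length = y.length := by
    intro A B x hx y hy
    rw [mem_dplus_length hx, mem_dplus_length hy]
  have step : ∀ u ∈ dplus v w, groveSum (vdash u (graft d e))
      = Finsupp.mapDomain (fun p => graft p e) (groveSum (dplus u d)) := by
    intro u hu
    rw [vdash_graft hd he, groveSum_image (hinj _ (hlen1 u d))]
  rw [Finset.sum_congr rfl step, ← Finsupp.mapDomain_finset_sum, hA,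
    Finsupp.mapDomain_finset_sum]
  have hlen2 : ∀ x ∈ dplus w d, ∀ y ∈ dplus w d, graft x e = graft y e → x = y := by
    intro x hx y hy h
    exact graft_left_inj_of_len (by rw [mem_dplus_length hx, mem_dplus_length hy]) h
  rw [vdash_graft hd he, Finset.sum_image hlen2]
  refine Finset.sum_congr rfl fun s hs => ?_
  rw [vdash_graft (mem_dplus_treeName hs) he]
  exact (groveSum_image (hinj _ (hlen1 v s))).symm

lemma groveSum_dplus_split {v w : List ℕ} (hv : TreeName v) (hw : TreeName w)
    (hv0 : v ≠ []) (hw0 : w ≠ []) :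
    groveSum (dplus v w) = groveSum (dashv v w) + groveSum (vdash v w) := by
  rw [dplus_eq_union hv hw hv0 hw0, groveSum_union (dashv_vdash_disjoint hv hw hv0 hw0)]

lemma AS_all : ∀ n v w t, TreeName v → TreeName w → TreeName t →
    v.length + w.length + t.length ≤ n → AS v w t := by
  intro n
  induction n with
  | zero =>
    intro v w t hv hw ht hlen
    have hv0 : v = [] := List.eq_nil_of_length_eq_zero (by omega)
    have hw0 : w = [] := List.eq_nil_of_length_eq_zero (by omega)
    have ht0 : t = [] := List.eq_nil_of_length_eq_zero (by omega)
    subst hv0; subst hw0; subst ht0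
    have h : dplus ([] : List ℕ) [] = {[]} := dplus_nil_left ⟨PB.leaf, rfl⟩
    rw [AS, h]
    simp only [Finset.sum_singleton]
  | succ n ih =>
    intro v w t hv hw ht hlen
    by_cases hv0 : v = []
    · subst hv0
      rw [AS, dplus_nil_left hw, Finset.sum_singleton]
      rw [groveSum]
      refine Finset.sum_congr rfl fun s hs => ?_
      rw [dplus_nil_left (mem_dplus_treeName hs), groveSum, Finset.sum_singleton]
    by_cases hw0 : w = []
    · subst hw0
      rw [AS, dplus_nil_right hv, dplus_nil_left ht, Finset.sum_singleton,
        Finset.sum_singleton]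
    by_cases ht0 : t = []
    · subst ht0
      rw [AS, dplus_nil_right hw, Finset.sum_singleton]
      rw [groveSum]
      refine Finset.sum_congr rfl fun u hu => ?_
      rw [dplus_nil_right (mem_dplus_treeName hu), groveSum, Finset.sum_singleton]
    -- main case
    obtain ⟨a, c, ha, hc, rfl⟩ := treeName_decomp' hv hv0
    obtain ⟨d, e, hd, he, rfl⟩ := treeName_decomp' hw hw0
    obtain ⟨p, q, hp, hq, rfl⟩ := treeName_decomp' ht ht0
    have hlv := length_graft a c
    have hlw := length_graft d e
    have hlt := length_graft p q
    have hA1 : AS c (graft d e) (graft p q) :=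
      ih c (graft d e) (graft p q) hc hw ht (by omega)
    have hA3 : AS (graft a c) (graft d e) p :=
      ih (graft a c) (graft d e) p hv hw hp (by omega)
    rw [AS]
    have splitL : ∀ u ∈ dplus (graft a c) (graft d e),
        groveSum (dplus u (graft p q))
          = groveSum (dashv u (graft p q)) + groveSum (vdash u (graft p q)) := by
      intro u hu
      exact groveSum_dplus_split (mem_dplus_treeName hu) ht
        (mem_dplus_ne_nil hu hv0) ht0
    have splitR : ∀ s ∈ dplus (graft d e) (graft p q),
        groveSum (dplus (graft a c) s)
          = groveSum (dashv (graft a c) s) + groveSum (vdash (graft a c) s) := by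
      intro s hs
      exact groveSum_dplus_split hv (mem_dplus_treeName hs) hv0
        (mem_dplus_ne_nil hs hw0)
    rw [Finset.sum_congr rfl splitL, Finset.sum_congr rfl splitR,
      Finset.sum_add_distrib, Finset.sum_add_distrib]
    have hLsplit : (dplus (graft a c) (graft d e) : Finset (List ℕ))
        = dashv (graft a c) (graft d e) ∪ vdash (graft a c) (graft d e) :=
      dplus_eq_union hv hw hv0 hw0
    have hRsplit : (dplus (graft d e) (graft p q) : Finset (List ℕ))
        = dashv (graft d e) (graft p q) ∪ vdash (graft d e) (graft p q) :=
      dplus_eq_union hw ht hw0 ht0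
    have hLd := dashv_vdash_disjoint hv hw hv0 hw0
    have hRd := dashv_vdash_disjoint hw ht hw0 ht0
    have e1 : ∑ u ∈ dplus (graft a c) (graft d e), groveSum (dashv u (graft p q))
        = ∑ u ∈ dashv (graft a c) (graft d e), groveSum (dashv u (graft p q))
          + ∑ u ∈ vdash (graft a c) (graft d e), groveSum (dashv u (graft p q)) := by
      rw [hLsplit, Finset.sum_union hLd]
    have e2 : ∑ s ∈ dplus (graft d e) (graft p q), groveSum (vdash (graft a c) s)
        = ∑ s ∈ dashv (graft d e) (graft p q), groveSum (vdash (graft a c) s)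
          + ∑ s ∈ vdash (graft d e) (graft p q), groveSum (vdash (graft a c) s) := by
      rw [hRsplit, Finset.sum_union hRd]
    rw [e1, e2, T1 ha hc hA1, T2 hv hd he, T3 hp hq hA3]
    abel

end Part5

/-- The dendriform dialgebra axioms hold in the span of the monomials X^v indexed
by tree names, with X^u ≺ X^v = X^{u ⊣ v}, X^u ≻ X^v = X^{u ⊢ v} and
x ⋆ y = x ≺ y + x ≻ y. -/
theorem stmt16 (x y z : List ℕ) (hx : TreeName x) (hy : TreeName y) (hz : TreeName z)
    (hx0 : x ≠ []) (hy0 : y ≠ []) (hz0 : z ≠ []) :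
    precF (precF (Finsupp.single x (1 : ℤ)) (Finsupp.single y 1)) (Finsupp.single z 1)
      = precF (Finsupp.single x 1)
          (precF (Finsupp.single y 1) (Finsupp.single z 1)
            + succF (Finsupp.single y 1) (Finsupp.single z 1)) ∧
    precF (succF (Finsupp.single x (1 : ℤ)) (Finsupp.single y 1)) (Finsupp.single z 1)
      = succF (Finsupp.single x 1) (precF (Finsupp.single y 1) (Finsupp.single z 1)) ∧
    succF (precF (Finsupp.single x (1 : ℤ)) (Finsupp.single y 1)
            + succF (Finsupp.single x 1) (Finsupp.single y 1)) (Finsupp.single z 1)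
      = succF (Finsupp.single x 1) (succF (Finsupp.single y 1) (Finsupp.single z 1)) := by
  refine ⟨?_, ?_, ?_⟩
  · -- (x ≺ y) ≺ z = x ≺ (y ⋆ z)
    rw [precF_single_single x y, precF_groveSum_single,
      precF_single_single y z, succF_single_single y z,
      ← groveSum_dplus_split hy hz hy0 hz0, precF_single_groveSum]
    obtain ⟨a, c, ha, hc, rfl⟩ := treeName_decomp' hx hx0
    exact T1 ha hc (AS_all (c.length + y.length + z.length) c y z hc hy hz le_rfl)
  · -- (x ≻ y) ≺ z = x ≻ (y ≺ z)
    rw [succF_single_single x y, precF_groveSum_single,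
      precF_single_single y z, succF_single_groveSum]
    obtain ⟨d, e, hd, he, rfl⟩ := treeName_decomp' hy hy0
    exact T2 hx hd he
  · -- (x ⋆ y) ≻ z = x ≻ (y ≻ z)
    rw [precF_single_single x y, succF_single_single x y,
      ← groveSum_dplus_split hx hy hx0 hy0, succF_groveSum_single,
      succF_single_single y z, succF_single_groveSum]
    obtain ⟨p, q, hp, hq, rfl⟩ := treeName_decomp' hz hz0
    exact T3 hp hq (AS_all (x.length + y.length + p.length) x y p hx hy hp le_rfl)
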